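/- Under the modular setup below, along every sequence (β_n, β̄_n) in (0,∞)² tending to the M* limit (i.e. β_n → 0, β̄_n → ∞, and 𝔟(β_n, β̄_n) → ∞), one has Z̃(β_n, β̄_n) / β_n → 1. -/

import Mathlib

open MeasureTheory Filter

/-- The reduced partition function
`Z̃(β, β̄) = (1-e^{-β})(1-e^{-β̄}) + ∫ e^{-βh - β̄h̄} dμ(h,h̄)`. -/
noncomputable def Ztil (μ : Measure (ℝ × ℝ)) (β βb : ℝ) : ℝ :=
  (1 - Real.exp (-β)) * (1 - Real.exp (-βb)) +
    ∫ p : ℝ × ℝ, Real.exp (-β * p.1 - βb * p.2) ∂μ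

/-- The modular crossing kernel
`K(β, β̄) = (2π/√(ββ̄)) exp(4π²A/β + 4π²A/β̄ - Aβ - Aβ̄)`. -/
noncomputable def Kker (A β βb : ℝ) : ℝ :=
  2 * Real.pi / Real.sqrt (β * βb) *
    Real.exp (4 * Real.pi ^ 2 * A / β + 4 * Real.pi ^ 2 * A / βb - A * β - A * βb)

/-- `𝔟(β, β̄) = β̄ - 4π²A/(Tβ) + (3/(2T)) log β`. -/
noncomputable def bfrak (A T β βb : ℝ) : ℝ :=
  βb - 4 * Real.pi ^ 2 * A / (T * β) + 3 / (2 * T) * Real.log β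

lemma exp_neg_le_one' {x : ℝ} (hx : 0 ≤ x) : Real.exp (-x) ≤ 1 := by
  simpa using Real.exp_le_exp.2 (neg_nonpos.mpr hx)

lemma aux_slope : Tendsto (fun x : ℝ => (1 - Real.exp (-x)) / x) (nhdsWithin 0 {(0:ℝ)}ᶜ)
    (nhds 1) := by
  have hd : HasDerivAt (fun x : ℝ => 1 - Real.exp (-x)) 1 0 := by
    have h1 : HasDerivAt (fun x : ℝ => Real.exp (-x)) (-1) 0 := by
      have := (Real.hasDerivAt_exp (-0)).comp 0 (hasDerivAt_neg (0:ℝ))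
      simpa [Function.comp_def] using this
    simpa using (h1.const_sub 1)
  have := hasDerivAt_iff_tendsto_slope.mp hd
  refine this.congr' ?_
  filter_upwards [self_mem_nhdsWithin] with x hx
  simp [slope_def_field]

/-- Key quantitative bound on the non-vacuum part. -/
lemma key_bound (A T : ℝ) (hA : 0 < A) (hT : 0 < T) (μ : Measure (ℝ × ℝ))
    (hae : ∀ᵐ p ∂μ, T ≤ p.1 ∧ T ≤ p.2)
    (hint : ∀ β βb : ℝ, 0 < β → 0 < βb →
      Integrable (fun p : ℝ × ℝ => Real.exp (-β * p.1 - βb * p.2)) μ)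
    (hmod : ∀ β βb : ℝ, 0 < β → 0 < βb →
      Ztil μ β βb = Kker A β βb * Ztil μ (4 * Real.pi ^ 2 / β) (4 * Real.pi ^ 2 / βb))
    (b bb : ℝ) (hb : 0 < b) (hb1 : b ≤ 1) (hbb : 1 ≤ bb) :
    (∫ p : ℝ × ℝ, Real.exp (-b * p.1 - bb * p.2) ∂μ) / b ≤
      (2 * Real.pi * Real.exp (4 * Real.pi ^ 2 * A + T) *
        (1 + ∫ p : ℝ × ℝ, Real.exp (-(4 * Real.pi ^ 2) * p.1 - 4 * Real.pi ^ 2 * p.2) ∂μ)) *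
      Real.exp (-(T * bfrak A T b bb)) := by
  set E : ℝ := 4 * Real.pi ^ 2 with hE
  have hEpos : 0 < E := by positivity
  set C₀ : ℝ := 1 + ∫ p : ℝ × ℝ, Real.exp (-E * p.1 - E * p.2) ∂μ with hC₀
  have hC₀nonneg : 0 ≤ C₀ := by
    have : 0 ≤ ∫ p : ℝ × ℝ, Real.exp (-E * p.1 - E * p.2) ∂μ :=
      integral_nonneg fun p => (Real.exp_nonneg _)
    linarith
  -- Step A : pull out e^{-(bb-1)T}
  have stepA : (∫ p : ℝ × ℝ, Real.exp (-b * p.1 - bb * p.2) ∂μ) ≤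
      Real.exp (-((bb - 1) * T)) * ∫ p : ℝ × ℝ, Real.exp (-b * p.1 - 1 * p.2) ∂μ := by
    rw [← integral_const_mul]
    refine integral_mono_ae (hint b bb hb (lt_of_lt_of_le one_pos hbb))
      ((hint b 1 hb one_pos).const_mul _) ?_
    filter_upwards [hae] with p hp
    rw [← Real.exp_add]
    apply Real.exp_le_exp.2
    nlinarith [hp.1, hp.2]
  -- Step B : bound the inner integral by Ztil μ b 1
  have stepB : (∫ p : ℝ × ℝ, Real.exp (-b * p.1 - 1 * p.2) ∂μ) ≤ Ztil μ b 1 := by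
    rw [Ztil]
    have h1 : Real.exp (-b) ≤ 1 := exp_neg_le_one' hb.le
    have h2 : Real.exp (-(1:ℝ)) ≤ 1 := exp_neg_le_one' (by norm_num)
    nlinarith
  -- Step C : crossing
  have stepC : Ztil μ b 1 = Kker A b 1 * Ztil μ (E / b) (E / 1) := hmod b 1 hb one_pos
  -- Step D : bound the dual Ztil
  have stepD : Ztil μ (E / b) (E / 1) ≤ C₀ := by
    rw [Ztil, hC₀]
    have hEb : 0 < E / b := by positivity
    have hvac : (1 - Real.exp (-(E / b))) * (1 - Real.exp (-(E / 1))) ≤ 1 := by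
      have h1 : Real.exp (-(E / b)) ≤ 1 := exp_neg_le_one' hEb.le
      have h2 : Real.exp (-(E / 1)) ≤ 1 := exp_neg_le_one' (by positivity)
      nlinarith [Real.exp_nonneg (-(E / b)), Real.exp_nonneg (-(E / 1))]
    have hI : (∫ p : ℝ × ℝ, Real.exp (-(E / b) * p.1 - (E / 1) * p.2) ∂μ) ≤
        ∫ p : ℝ × ℝ, Real.exp (-E * p.1 - E * p.2) ∂μ := by
      refine integral_mono_ae (hint _ _ hEb (by positivity)) (hint _ _ hEpos hEpos) ?_
      filter_upwards [hae] with p hp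
      apply Real.exp_le_exp.2
      have hE' : E ≤ E / b := by
        rw [le_div_iff₀ hb]; nlinarith
      have hp1 : 0 ≤ p.1 := le_trans hT.le hp.1
      have : E / 1 = E := by norm_num
      rw [this]
      nlinarith [hp.1, hp.2]
    linarith
  -- Step E : bound the kernel
  have stepE : Kker A b 1 ≤ 2 * Real.pi / Real.sqrt b * Real.exp (E * A / b + E * A) := by
    rw [Kker, mul_one]
    have hs : 0 ≤ 2 * Real.pi / Real.sqrt b := by positivity
    have : Real.exp (E * A / b + E * A / 1 - A * b - A * 1) ≤ Real.exp (E * A / b + E * A) := by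
      apply Real.exp_le_exp.2
      have : E * A / 1 = E * A := by norm_num
      nlinarith [mul_pos hA hb]
    exact mul_le_mul_of_nonneg_left this hs
  -- Combine
  have hKnonneg : 0 ≤ 2 * Real.pi / Real.sqrt b * Real.exp (E * A / b + E * A) := by positivity
  have hZnonneg : 0 ≤ Kker A b 1 := by
    rw [Kker]; positivity
  have chain : (∫ p : ℝ × ℝ, Real.exp (-b * p.1 - bb * p.2) ∂μ) ≤
      Real.exp (-((bb - 1) * T)) *
        (2 * Real.pi / Real.sqrt b * Real.exp (E * A / b + E * A)) * C₀ := by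
    calc (∫ p : ℝ × ℝ, Real.exp (-b * p.1 - bb * p.2) ∂μ)
        ≤ Real.exp (-((bb - 1) * T)) * ∫ p : ℝ × ℝ, Real.exp (-b * p.1 - 1 * p.2) ∂μ := stepA
      _ ≤ Real.exp (-((bb - 1) * T)) * (Kker A b 1 * Ztil μ (E / b) (E / 1)) := by
          rw [← stepC]
          exact mul_le_mul_of_nonneg_left stepB (Real.exp_nonneg _)
      _ ≤ Real.exp (-((bb - 1) * T)) * (Kker A b 1 * C₀) := by
          refine mul_le_mul_of_nonneg_left ?_ (Real.exp_nonneg _)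
          exact mul_le_mul_of_nonneg_left stepD hZnonneg
      _ ≤ Real.exp (-((bb - 1) * T)) *
          ((2 * Real.pi / Real.sqrt b * Real.exp (E * A / b + E * A)) * C₀) := by
          refine mul_le_mul_of_nonneg_left ?_ (Real.exp_nonneg _)
          exact mul_le_mul_of_nonneg_right stepE hC₀nonneg
      _ = _ := by ring
  have hfinal : Real.exp (-((bb - 1) * T)) *
      (2 * Real.pi / Real.sqrt b * Real.exp (E * A / b + E * A)) * C₀ / b =
      (2 * Real.pi * Real.exp (E * A + T) * C₀) * Real.exp (-(T * bfrak A T b bb)) := by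
    have hsb : Real.sqrt b * b = Real.exp (3 / 2 * Real.log b) := by
      rw [show (3:ℝ) / 2 * Real.log b = Real.log b * (1/2) + Real.log b by ring,
        Real.exp_add, Real.exp_log hb, ← Real.rpow_def_of_pos hb, ← Real.sqrt_eq_rpow]
    have hsb0 : Real.sqrt b ≠ 0 := by positivity
    have hb0 : b ≠ 0 := ne_of_gt hb
    have hexp : -((bb - 1) * T) + (E * A / b + E * A) - 3 / 2 * Real.log b
        = (E * A + T) + (-(T * bfrak A T b bb)) := by
      rw [bfrak, hE]
      field_simp
      ring
    have hL : Real.exp (-((bb - 1) * T)) * Real.exp (E * A / b + E * A) / (Real.sqrt b * b)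
        = Real.exp (E * A + T) * Real.exp (-(T * bfrak A T b bb)) := by
      rw [hsb, ← Real.exp_add, ← Real.exp_sub, hexp, Real.exp_add]
    have hrw : Real.exp (-((bb - 1) * T)) *
        (2 * Real.pi / Real.sqrt b * Real.exp (E * A / b + E * A)) * C₀ / b =
        2 * Real.pi * C₀ * (Real.exp (-((bb - 1) * T)) * Real.exp (E * A / b + E * A) /
          (Real.sqrt b * b)) := by
      field_simp
    rw [hrw, hL]
    ring
  calc (∫ p : ℝ × ℝ, Real.exp (-b * p.1 - bb * p.2) ∂μ) / b
      ≤ Real.exp (-((bb - 1) * T)) *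
        (2 * Real.pi / Real.sqrt b * Real.exp (E * A / b + E * A)) * C₀ / b := by
        exact div_le_div_of_nonneg_right chain hb.le
    _ = (2 * Real.pi * Real.exp (E * A + T) * C₀) * Real.exp (-(T * bfrak A T b bb)) := hfinal

/-- direct-channel vacuum dominance, Eq. (3.15): in the M* limit
(`β → 0`, `β̄ → ∞`, `𝔟(β,β̄) → ∞`), one has `Z̃(β, β̄)/β → 1`. -/
theorem stmt13 (A T : ℝ) (hA : 0 < A) (hT : 0 < T) (μ : Measure (ℝ × ℝ))
    (hsupp : μ {p : ℝ × ℝ | p.1 < T ∨ p.2 < T} = 0)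
    (hint : ∀ β βb : ℝ, 0 < β → 0 < βb →
      Integrable (fun p : ℝ × ℝ => Real.exp (-β * p.1 - βb * p.2)) μ)
    (hmod : ∀ β βb : ℝ, 0 < β → 0 < βb →
      Ztil μ β βb = Kker A β βb * Ztil μ (4 * Real.pi ^ 2 / β) (4 * Real.pi ^ 2 / βb))
    (β βb : ℕ → ℝ) (hβpos : ∀ n, 0 < β n) (hβbpos : ∀ n, 0 < βb n)
    (hβ0 : Tendsto β atTop (nhds 0)) (hβb : Tendsto βb atTop atTop)
    (hM : Tendsto (fun n => bfrak A T (β n) (βb n)) atTop atTop) :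
    Tendsto (fun n => Ztil μ (β n) (βb n) / β n) atTop (nhds 1) := by
  have hae : ∀ᵐ p ∂μ, T ≤ p.1 ∧ T ≤ p.2 := by
    rw [ae_iff]
    simp only [not_and_or, not_le]
    exact hsupp
  -- vacuum part
  have hvac1 : Tendsto (fun n => (1 - Real.exp (-β n)) / β n) atTop (nhds 1) := by
    refine aux_slope.comp ?_
    refine tendsto_nhdsWithin_of_tendsto_nhds_of_eventually_within _ hβ0 ?_
    filter_upwards with n
    exact (hβpos n).ne'
  have hvac2 : Tendsto (fun n => 1 - Real.exp (-βb n)) atTop (nhds 1) := by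
    have h0 : Tendsto (fun n => Real.exp (-βb n)) atTop (nhds 0) :=
      Real.tendsto_exp_atBot.comp (tendsto_neg_atTop_atBot.comp hβb)
    simpa using tendsto_const_nhds.sub h0
  -- integral part
  have hIzero : Tendsto
      (fun n => (∫ p : ℝ × ℝ, Real.exp (-β n * p.1 - βb n * p.2) ∂μ) / β n)
      atTop (nhds 0) := by
    set C₁ : ℝ := 2 * Real.pi * Real.exp (4 * Real.pi ^ 2 * A + T) *
      (1 + ∫ p : ℝ × ℝ, Real.exp (-(4 * Real.pi ^ 2) * p.1 - 4 * Real.pi ^ 2 * p.2) ∂μ)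
    have hg : Tendsto (fun n => C₁ * Real.exp (-(T * bfrak A T (β n) (βb n))))
        atTop (nhds 0) := by
      have h1 : Tendsto (fun n => T * bfrak A T (β n) (βb n)) atTop atTop :=
        hM.const_mul_atTop hT
      have h2 : Tendsto (fun n => Real.exp (-(T * bfrak A T (β n) (βb n)))) atTop (nhds 0) :=
        Real.tendsto_exp_atBot.comp (tendsto_neg_atTop_atBot.comp h1)
      simpa using tendsto_const_nhds.mul h2
    refine squeeze_zero' ?_ ?_ hg
    · filter_upwards with n
      exact div_nonneg (integral_nonneg fun p => Real.exp_nonneg _) (hβpos n).le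
    · have hsm : ∀ᶠ n in atTop, β n < 1 := hβ0.eventually (gt_mem_nhds (by norm_num))
      have hbg : ∀ᶠ n in atTop, 1 ≤ βb n := hβb.eventually_ge_atTop 1
      filter_upwards [hsm, hbg] with n h1 h2
      exact key_bound A T hA hT μ hae hint hmod (β n) (βb n) (hβpos n) h1.le h2
  have : Tendsto (fun n =>
      (1 - Real.exp (-β n)) / β n * (1 - Real.exp (-βb n)) +
      (∫ p : ℝ × ℝ, Real.exp (-β n * p.1 - βb n * p.2) ∂μ) / β n) atTop (nhds 1) := by
    have := (hvac1.mul hvac2).add hIzero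
    simpa using this
  refine this.congr fun n => ?_
  rw [Ztil]
  ring
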